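/- Let a ∈ K = F_{2^τ}((π)) and let b in an algebraic closure of K satisfy b² + b = a. Then D(a) = O (the full ring of integers) if and only if K(b) is an unramified quadratic extension of K. -/

import Mathlib

noncomputable section

/-- The finite field with `2 ^ τ` elements. -/
abbrev Fq (τ : ℕ) := GaloisField 2 τ

/-- The field of formal Laurent series `K = F_{2^τ}((π))`. -/
abbrev Kk (τ : ℕ) := LaurentSeries (Fq τ)

/-- The ring of integers `O = F_{2^τ}[[π]]`. -/
abbrev Ok (τ : ℕ) := PowerSeries (Fq τ)

namespace ASaux

variable {τ : ℕ}

instance : CharP (Kk τ) 2 :=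
  charP_of_injective_ringHom (algebraMap (Fq τ) (Kk τ)).injective 2

instance : CharP (Ok τ) 2 :=
  charP_of_injective_ringHom (algebraMap (Fq τ) (Ok τ)).injective 2

instance : CharP (AlgebraicClosure (Kk τ)) 2 :=
  charP_of_injective_ringHom (algebraMap (Kk τ) (AlgebraicClosure (Kk τ))).injective 2

open HahnSeries

lemma ofPS_coeff_neg (c : Ok τ) {n : ℤ} (hn : n < 0) :
    (HahnSeries.ofPowerSeries ℤ (Fq τ) c).coeff n = 0 := by
  rw [HahnSeries.ofPowerSeries_apply, HahnSeries.embDomain_notin_range]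
  rintro ⟨m, hm⟩
  simp at hm
  omega

/-- membership in the image of the power series ring -/
lemma mem_range_iff (z : Kk τ) :
    (∃ c : Ok τ, HahnSeries.ofPowerSeries ℤ (Fq τ) c = z) ↔ 0 ≤ z.order := by
  constructor
  · rintro ⟨c, rfl⟩
    rcases eq_or_ne (HahnSeries.ofPowerSeries ℤ (Fq τ) c : Kk τ) 0 with h | h
    · rw [h]; simp
    by_contra hlt
    push_neg at hlt
    exact HahnSeries.coeff_order_eq_zero.not.2 h (ofPS_coeff_neg c hlt)
  · intro h
    refine ⟨PowerSeries.X ^ (Int.natAbs z.order) * z.powerSeriesPart, ?_⟩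
    rw [map_mul, HahnSeries.ofPowerSeries_X_pow, Int.natAbs_of_nonneg h]
    exact z.single_order_mul_powerSeriesPart


lemma order_inv (x : Kk τ) (hx : x ≠ 0) : (x⁻¹).order = -x.order := by
  have h2 := HahnSeries.order_mul hx (inv_ne_zero hx)
  rw [mul_inv_cancel₀ hx, HahnSeries.order_one] at h2
  omega

lemma mem_span_iff {x : Kk τ} (hx : x ≠ 0) (y : Kk τ) :
    y ∈ Submodule.span (Ok τ) {x} ↔ y = 0 ∨ x.order ≤ y.order := by
  rw [Submodule.mem_span_singleton]
  constructor
  · rintro ⟨c, rfl⟩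
    rcases eq_or_ne (c • x) 0 with h | h
    · exact Or.inl h
    right
    rw [Algebra.smul_def] at h ⊢
    have hc : (algebraMap (Ok τ) (Kk τ)) c ≠ 0 := left_ne_zero_of_mul h
    rw [HahnSeries.order_mul hc hx]
    have h0 : 0 ≤ ((algebraMap (Ok τ) (Kk τ)) c).order :=
      (mem_range_iff _).mp ⟨c, rfl⟩
    omega
  · rintro (rfl | hle)
    · exact ⟨0, zero_smul _ _⟩
    rcases eq_or_ne y 0 with rfl | hy
    · exact ⟨0, zero_smul _ _⟩
    have hz : (0:ℤ) ≤ (y * x⁻¹).order := by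
      rw [HahnSeries.order_mul hy (inv_ne_zero hx), order_inv x hx]
      omega
    obtain ⟨c, hc⟩ := (mem_range_iff (y * x⁻¹)).mpr hz
    refine ⟨c, ?_⟩
    rw [Algebra.smul_def, LaurentSeries.coe_algebraMap, hc, mul_assoc,
      inv_mul_cancel₀ hx, mul_one]


lemma psol (c : Ok τ) (hc : PowerSeries.constantCoeff c = 0) :
    ∃ h : Ok τ, h ^ 2 + h = c := by
  classical
  set s : ℕ → Ok τ := fun N => ∑ i ∈ Finset.range N, c ^ (2 ^ i) with hs
  have hcoeff_pow : ∀ (i n : ℕ), n < 2 ^ i → PowerSeries.coeff n (c ^ (2 ^ i)) = 0 := by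
    intro i n hn
    exact PowerSeries.X_pow_dvd_iff.mp
      (pow_dvd_pow_of_dvd (PowerSeries.X_dvd_iff.mpr hc) _) n hn
  have hs2 : ∀ N, (s N) ^ 2 + s N = c + c ^ (2 ^ N) := by
    intro N
    induction N with
    | zero =>
      show (0:Ok τ) ^ 2 + 0 = c + c ^ 2 ^ 0
      rw [zero_pow (by norm_num), zero_add, pow_zero, pow_one, CharTwo.add_self_eq_zero]
    | succ N ih =>
      have hsucc : s (N + 1) = s N + c ^ (2 ^ N) := Finset.sum_range_succ _ _
      rw [hsucc]
      calc (s N + c ^ 2 ^ N) ^ 2 + (s N + c ^ 2 ^ N)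
          = ((s N) ^ 2 + s N) + ((c ^ 2 ^ N) ^ 2 + c ^ 2 ^ N) := by
            rw [CharTwo.add_sq]; ring
        _ = (c + c ^ 2 ^ N) + ((c ^ 2 ^ N) ^ 2 + c ^ 2 ^ N) := by rw [ih]
        _ = c + (c ^ 2 ^ N) ^ 2 + (c ^ 2 ^ N + c ^ 2 ^ N) := by ring
        _ = c + (c ^ 2 ^ N) ^ 2 := by rw [CharTwo.add_self_eq_zero, add_zero]
        _ = c + c ^ 2 ^ (N + 1) := by rw [← pow_mul, ← pow_succ]
  have hagree : ∀ M N n : ℕ, M ≤ N → n < 2 ^ M →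
      PowerSeries.coeff n (s M) = PowerSeries.coeff n (s N) := by
    intro M N n hMN hn
    have hsplit : s N = s M + ∑ i ∈ Finset.Ico M N, c ^ (2 ^ i) := by
      rw [hs]; exact (Finset.sum_range_add_sum_Ico _ hMN).symm
    rw [hsplit, map_add, left_eq_add, map_sum]
    exact Finset.sum_eq_zero fun i hi => hcoeff_pow i n (lt_of_lt_of_le hn
      (Nat.pow_le_pow_right (by norm_num) (Finset.mem_Ico.mp hi).1))
  set h : Ok τ := PowerSeries.mk fun n => PowerSeries.coeff n (s (n + 1)) with hdef
  have hkey : ∀ (N n : ℕ), n < 2 ^ N →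
      PowerSeries.coeff n h = PowerSeries.coeff n (s N) := by
    intro N n hn
    have h1 : PowerSeries.coeff n h = PowerSeries.coeff n (s (n + 1)) := by
      rw [hdef, PowerSeries.coeff_mk]
    rw [h1, hagree (n + 1) (max (n + 1) N) n (le_max_left _ _)
        (lt_of_lt_of_le (Nat.lt_two_pow_self (n := n)) (Nat.pow_le_pow_right (by norm_num) (Nat.le_succ n))),
      ← hagree N (max (n + 1) N) n (le_max_right _ _) hn]
  refine ⟨h, ?_⟩
  ext n
  set N := n + 1 with hN
  have hn2 : n < 2 ^ N :=
    lt_of_lt_of_le (Nat.lt_two_pow_self (n := n)) (Nat.pow_le_pow_right (by norm_num) (Nat.le_succ n))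
  have hrdvd : (PowerSeries.X : Ok τ) ^ (2 ^ N) ∣ h - s N := by
    rw [PowerSeries.X_pow_dvd_iff]
    intro m hm
    rw [map_sub, hkey N m hm, sub_self]
  have hexp : h ^ 2 + h = c + (c ^ 2 ^ N + ((h - s N) ^ 2 + (h - s N))) := by
    have hcalc : h = s N + (h - s N) := by ring
    calc h ^ 2 + h = (s N + (h - s N)) ^ 2 + (s N + (h - s N)) := by rw [← hcalc]
      _ = ((s N) ^ 2 + s N) + ((h - s N) ^ 2 + (h - s N)) := by rw [CharTwo.add_sq]; ring
      _ = c + (c ^ 2 ^ N + ((h - s N) ^ 2 + (h - s N))) := by rw [hs2 N]; ring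
  rw [hexp, map_add, map_add, map_add]
  have e1 : PowerSeries.coeff n (c ^ 2 ^ N) = 0 := hcoeff_pow N n hn2
  have e2 : PowerSeries.coeff n ((h - s N) ^ 2) = 0 := by
    refine PowerSeries.X_pow_dvd_iff.mp (dvd_trans hrdvd (dvd_pow_self _ (by norm_num))) n hn2
  have e3 : PowerSeries.coeff n (h - s N) = 0 :=
    PowerSeries.X_pow_dvd_iff.mp hrdvd n hn2
  rw [e1, e2, e3, add_zero, add_zero, add_zero]


lemma solv_of_order_pos (c : Kk τ) (hc : 1 ≤ c.order) : ∃ h : Kk τ, h ^ 2 + h = c := by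
  obtain ⟨C, hC⟩ := (mem_range_iff c).mpr (by omega)
  have h0 : PowerSeries.constantCoeff C = 0 := by
    have h1 : (HahnSeries.ofPowerSeries ℤ (Fq τ) C).coeff ((0 : ℕ) : ℤ) =
        PowerSeries.coeff 0 C := HahnSeries.ofPowerSeries_apply_coeff _ _
    rw [hC] at h1
    rw [← PowerSeries.coeff_zero_eq_constantCoeff_apply, ← h1]
    exact HahnSeries.coeff_eq_zero_of_lt_order (by push_cast; omega)
  obtain ⟨H, hH⟩ := psol C h0
  refine ⟨HahnSeries.ofPowerSeries ℤ (Fq τ) H, ?_⟩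
  rw [← map_pow, ← map_add, hH, hC]

lemma AS_add (x y : Kk τ) : (x + y) ^ 2 + (x + y) = (x ^ 2 + x) + (y ^ 2 + y) := by
  rw [CharTwo.add_sq]; ring

lemma AS_ne {a : Kk τ} (hna : ∀ h : Kk τ, h ^ 2 + h ≠ a) (h : Kk τ) :
    h ^ 2 + h + a ≠ 0 := by
  intro h0
  apply hna h
  rw [← CharTwo.neg_eq a]
  linear_combination h0

lemma AS_order_nonpos {a : Kk τ} (hna : ∀ h : Kk τ, h ^ 2 + h ≠ a) (h : Kk τ) :
    (h ^ 2 + h + a).order ≤ 0 := by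
  by_contra hlt
  push_neg at hlt
  obtain ⟨g, hg⟩ := solv_of_order_pos (h ^ 2 + h + a) (by omega)
  apply hna (g + h)
  rw [AS_add, hg]
  calc h ^ 2 + h + a + (h ^ 2 + h) = a + ((h ^ 2 + h) + (h ^ 2 + h)) := by ring
    _ = a := by rw [CharTwo.add_self_eq_zero, add_zero]


lemma char2_cancel (x y : Kk τ) : x + y + y = x := by
  rw [add_assoc, CharTwo.add_self_eq_zero, add_zero]

lemma residue_not_AS {a : Kk τ} (hna : ∀ h : Kk τ, h ^ 2 + h ≠ a) {h₀ : Kk τ}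
    (hc : (h₀ ^ 2 + h₀ + a).order = 0) (l : Fq τ) :
    (h₀ ^ 2 + h₀ + a).coeff 0 ≠ l ^ 2 + l := by
  intro hl
  set c := h₀ ^ 2 + h₀ + a with hcdef
  set L : Kk τ := HahnSeries.C l with hLdef
  have hLC : L ^ 2 + L = HahnSeries.C (l ^ 2 + l) := by rw [map_add, map_pow]
  rcases eq_or_ne (c + (L ^ 2 + L)) 0 with h0 | h0
  · apply hna (h₀ + L)
    rw [AS_add]
    have hceq : L ^ 2 + L = c := by rw [← CharTwo.neg_eq c]; linear_combination h0
    rw [hceq, hcdef]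
    calc h₀ ^ 2 + h₀ + (h₀ ^ 2 + h₀ + a) = a + (h₀ ^ 2 + h₀) + (h₀ ^ 2 + h₀) := by ring
      _ = a := char2_cancel _ _
  · have hco : ∀ k : ℤ, k ≤ 0 → (c + (L ^ 2 + L)).coeff k = 0 := by
      intro k hk
      rw [HahnSeries.coeff_add, hLC, HahnSeries.C_apply]
      rcases lt_or_eq_of_le hk with hk0 | hk0
      · rw [HahnSeries.coeff_eq_zero_of_lt_order (by omega),
          HahnSeries.coeff_single_of_ne (ne_of_lt hk0), add_zero]
      · subst hk0
        rw [hl, HahnSeries.coeff_single_same, CharTwo.add_self_eq_zero]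
    have hord : 1 ≤ (c + (L ^ 2 + L)).order := by
      by_contra hlt
      push_neg at hlt
      exact HahnSeries.coeff_order_eq_zero.not.2 h0 (hco _ (by omega))
    obtain ⟨g, hg⟩ := solv_of_order_pos _ hord
    apply hna (g + (h₀ + L))
    rw [AS_add, hg, AS_add, hcdef]
    calc h₀ ^ 2 + h₀ + a + (L ^ 2 + L) + (h₀ ^ 2 + h₀ + (L ^ 2 + L))
        = a + (h₀ ^ 2 + h₀ + (L ^ 2 + L)) + (h₀ ^ 2 + h₀ + (L ^ 2 + L)) := by ring
      _ = a := char2_cancel _ _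


lemma coeff_zero_sq {t : Kk τ} (ht : 0 ≤ t.order) : (t ^ 2).coeff 0 = (t.coeff 0) ^ 2 := by
  obtain ⟨T, hT⟩ := (mem_range_iff t).mpr ht
  have h1 : (t ^ 2).coeff ((0 : ℕ) : ℤ) = PowerSeries.coeff 0 (T ^ 2) := by
    rw [← hT, ← map_pow, HahnSeries.ofPowerSeries_apply_coeff]
  have h2 : t.coeff ((0 : ℕ) : ℤ) = PowerSeries.coeff 0 T := by
    rw [← hT, HahnSeries.ofPowerSeries_apply_coeff]
  push_cast at h1 h2
  rw [h1, h2, PowerSeries.coeff_zero_eq_constantCoeff_apply,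
    PowerSeries.coeff_zero_eq_constantCoeff_apply, map_pow]

lemma improve {a : Kk τ} (hna : ∀ h : Kk τ, h ^ 2 + h ≠ a) {h₀ : Kk τ} {n : ℤ} (hn : n < 0)
    (hord : (h₀ ^ 2 + h₀ + a).order = 2 * n) :
    ∃ h : Kk τ, 2 * n < (h ^ 2 + h + a).order := by
  set c := h₀ ^ 2 + h₀ + a with hcdef
  obtain ⟨δ, hδ⟩ := surjective_frobenius (Fq τ) 2 (c.coeff (2 * n))
  rw [frobenius_def] at hδ
  set t : Kk τ := HahnSeries.single n δ with htdef
  have ht2 : t ^ 2 = HahnSeries.single (2 * n) (δ ^ 2) := by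
    rw [pow_two, htdef, HahnSeries.single_mul_single, two_mul, pow_two]
  have hexp : (t + h₀) ^ 2 + (t + h₀) + a = (t ^ 2 + t) + c := by
    rw [AS_add, hcdef]; ring
  refine ⟨t + h₀, ?_⟩
  rw [hexp]
  have hne : (t ^ 2 + t) + c ≠ 0 := by rw [← hexp]; exact AS_ne hna _
  have hco : ∀ k : ℤ, k ≤ 2 * n → ((t ^ 2 + t) + c).coeff k = 0 := by
    intro k hk
    rw [HahnSeries.coeff_add, HahnSeries.coeff_add, ht2, htdef]
    rcases lt_or_eq_of_le hk with hk0 | hk0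
    · rw [HahnSeries.coeff_single_of_ne (ne_of_lt hk0),
        HahnSeries.coeff_single_of_ne (by omega : k ≠ n),
        HahnSeries.coeff_eq_zero_of_lt_order (by omega), add_zero, add_zero]
    · subst hk0
      rw [HahnSeries.coeff_single_same, HahnSeries.coeff_single_of_ne (by omega : 2 * n ≠ n),
        add_zero, hδ, CharTwo.add_self_eq_zero]
  by_contra hle
  push_neg at hle
  exact HahnSeries.coeff_order_eq_zero.not.2 hne (hco _ hle)


lemma exists_order_zero_iff_even {a : Kk τ} (hna : ∀ h : Kk τ, h ^ 2 + h ≠ a) :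
    (∃ h : Kk τ, (h ^ 2 + h + a).order = 0) ↔ ∀ h : Kk τ, Even ((h ^ 2 + h + a).order) := by
  constructor
  · rintro ⟨h₀, hc⟩ h
    set c := h₀ ^ 2 + h₀ + a with hcdef
    set t := h + h₀ with htdef
    have hh : h = t + h₀ := by rw [htdef, char2_cancel]
    have hexp : h ^ 2 + h + a = t ^ 2 + (t + c) := by rw [hh, AS_add, hcdef]; ring
    have hne : t ^ 2 + (t + c) ≠ 0 := by rw [← hexp]; exact AS_ne hna h
    rw [hexp]
    rcases lt_or_ge t.order 0 with hto | hto
    · have ht : t ≠ 0 := by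
        intro h0; rw [h0] at hto; simp at hto
      have htt : (t ^ 2).order = t.order + t.order := by
        rw [pow_two, HahnSeries.order_mul ht ht]
      rcases eq_or_ne (t + c) 0 with h0 | h0
      · have : t ^ 2 + (t + c) = t ^ 2 := by rw [h0, add_zero]
        rw [this, htt]
        exact ⟨t.order, rfl⟩
      · have hmin : t.order ≤ (t + c).order := by
          refine le_trans ?_ (HahnSeries.min_order_le_order_add h0)
          rw [hc]
          exact le_min le_rfl (le_of_lt hto)
        have hcoeff : (t ^ 2 + (t + c)).coeff (t.order + t.order) ≠ 0 := by
          rw [HahnSeries.coeff_add,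
            HahnSeries.coeff_eq_zero_of_lt_order (x := t + c) (by omega), add_zero, pow_two]
          rw [show t.order + t.order = (t*t).order from by rw [HahnSeries.order_mul ht ht]]
          exact HahnSeries.coeff_order_eq_zero.not.2 (mul_ne_zero ht ht)
        have hub : (t ^ 2 + (t + c)).order ≤ t.order + t.order :=
          HahnSeries.order_le_of_coeff_ne_zero hcoeff
        have hlb : t.order + t.order ≤ (t ^ 2 + (t + c)).order := by
          by_contra hltb
          push_neg at hltb
          apply HahnSeries.coeff_order_eq_zero.not.2 hne
          rw [HahnSeries.coeff_add,
            HahnSeries.coeff_eq_zero_of_lt_order (x := t ^ 2) (by omega),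
            HahnSeries.coeff_eq_zero_of_lt_order (x := t + c) (by omega), add_zero]
          
        rw [le_antisymm hub hlb]
        exact ⟨t.order, rfl⟩
    · have hcoeff0 : (t ^ 2 + (t + c)).coeff 0 ≠ 0 := by
        rw [HahnSeries.coeff_add, HahnSeries.coeff_add, coeff_zero_sq hto]
        intro hz
        apply residue_not_AS hna hc (t.coeff 0)
        rw [← CharTwo.neg_eq (t.coeff 0 ^ 2 + t.coeff 0)]
        linear_combination hz
      have hneg : ∀ k : ℤ, k < 0 → (t ^ 2 + (t + c)).coeff k = 0 := by
        intro k hk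
        obtain ⟨T, hT⟩ := (mem_range_iff t).mpr hto
        rw [HahnSeries.coeff_add, HahnSeries.coeff_add, ← hT, ← map_pow,
          ofPS_coeff_neg _ hk, ofPS_coeff_neg _ hk,
          HahnSeries.coeff_eq_zero_of_lt_order (x := c) (by omega)]
        simp
      have hub : (t ^ 2 + (t + c)).order ≤ 0 := HahnSeries.order_le_of_coeff_ne_zero hcoeff0
      have hlb : (0:ℤ) ≤ (t ^ 2 + (t + c)).order := by
        by_contra hltb
        push_neg at hltb
        exact HahnSeries.coeff_order_eq_zero.not.2 hne (hneg _ hltb)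
      rw [le_antisymm hub hlb]
      exact Even.zero
  · intro heven
    obtain ⟨s, ⟨h₀, hs⟩, hmax⟩ := Int.exists_greatest_of_bdd
      (P := fun z => ∃ h : Kk τ, (h ^ 2 + h + a).order = z)
      ⟨0, fun z hz => by obtain ⟨h, hh⟩ := hz; rw [← hh]; exact AS_order_nonpos hna h⟩
      ⟨(0 ^ 2 + 0 + a).order, 0, rfl⟩
    have hs0 : s ≤ 0 := hs ▸ AS_order_nonpos hna h₀
    rcases eq_or_lt_of_le hs0 with h0 | hlt
    · exact ⟨h₀, by rw [hs, h0]⟩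
    · obtain ⟨n, hn⟩ := heven h₀
      rw [hs] at hn
      have hn0 : n < 0 := by omega
      obtain ⟨h, hh⟩ := improve hna hn0 (by rw [hs]; omega)
      exact absurd (hmax _ ⟨h, rfl⟩) (by omega)

lemma defect_iff {a : Kk τ} (hna : ∀ h : Kk τ, h ^ 2 + h ≠ a) :
    (⨅ h : Kk τ, Submodule.span (Ok τ) {h ^ 2 + h + a}) =
      Submodule.span (Ok τ) {(1 : Kk τ)} ↔ ∃ h : Kk τ, (h ^ 2 + h + a).order = 0 := by
  constructor
  · intro heq
    obtain ⟨s, ⟨h₀, hs⟩, hmax⟩ := Int.exists_greatest_of_bdd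
      (P := fun z => ∃ h : Kk τ, (h ^ 2 + h + a).order = z)
      ⟨0, fun z hz => by obtain ⟨h, hh⟩ := hz; rw [← hh]; exact AS_order_nonpos hna h⟩
      ⟨(0 ^ 2 + 0 + a).order, 0, rfl⟩
    have hy : (HahnSeries.single s 1 : Kk τ) ∈
        ⨅ h : Kk τ, Submodule.span (Ok τ) {h ^ 2 + h + a} := by
      rw [Submodule.mem_iInf]
      intro h
      rw [mem_span_iff (AS_ne hna h)]
      right
      rw [HahnSeries.order_single one_ne_zero]
      exact hmax _ ⟨h, rfl⟩
    rw [heq, mem_span_iff one_ne_zero, HahnSeries.order_one] at hy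
    rcases hy with hy | hy
    · exact absurd hy (HahnSeries.single_ne_zero one_ne_zero)
    · refine ⟨h₀, le_antisymm ?_ ?_⟩
      · exact AS_order_nonpos hna h₀
      · rw [hs]
        rw [HahnSeries.order_single one_ne_zero] at hy
        exact hy
  · rintro ⟨h₀, h0⟩
    apply le_antisymm
    · refine le_trans (iInf_le _ h₀) ?_
      intro y hy
      rw [mem_span_iff (AS_ne hna h₀), h0] at hy
      rw [mem_span_iff one_ne_zero, HahnSeries.order_one]
      exact hy
    · rw [le_iInf_iff]
      intro h y hy
      rw [mem_span_iff one_ne_zero, HahnSeries.order_one] at hy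
      rw [mem_span_iff (AS_ne hna h)]
      rcases hy with rfl | hy
      · exact Or.inl rfl
      · exact Or.inr (le_trans (AS_order_nonpos hna h) hy)


lemma even_order_sq (u : Kk τ) : Even ((u * u).order) := by
  rcases eq_or_ne u 0 with rfl | hu
  · simp
  · rw [HahnSeries.order_mul hu hu]
    exact ⟨u.order, rfl⟩

set_option maxHeartbeats 2000000 in
set_option synthInstance.maxHeartbeats 400000 in
open Polynomial IntermediateField in
lemma unram_iff {a : Kk τ} (b : AlgebraicClosure (Kk τ))
    (hb : b ^ 2 + b = algebraMap (Kk τ) (AlgebraicClosure (Kk τ)) a)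
    (hna : ∀ h : Kk τ, h ^ 2 + h ≠ a) :
    (Module.finrank (Kk τ) ((Kk τ)⟮b⟯) = 2 ∧
      ∀ x : (Kk τ)⟮b⟯, x ≠ 0 → Even (HahnSeries.order (Algebra.norm (Kk τ) x))) ↔
      ∀ h : Kk τ, Even ((h ^ 2 + h + a).order) := by
  set P : (Kk τ)[X] := X ^ 2 + X - Polynomial.C a with hPdef
  have hPb : Polynomial.aeval b P = 0 := by
    have h1 : Polynomial.aeval b P =
        Polynomial.aeval b ((X : (Kk τ)[X]) ^ 2 + X) - Polynomial.aeval b (Polynomial.C a) := by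
      rw [hPdef]
      exact map_sub (Polynomial.aeval b) ((X : (Kk τ)[X]) ^ 2 + X) (Polynomial.C a)
    have h2 : Polynomial.aeval b ((X : (Kk τ)[X]) ^ 2 + X) =
        Polynomial.aeval b ((X : (Kk τ)[X]) ^ 2) + Polynomial.aeval b (X : (Kk τ)[X]) :=
      map_add _ _ _
    have h3 : Polynomial.aeval b ((X : (Kk τ)[X]) ^ 2) =
        (Polynomial.aeval b (X : (Kk τ)[X])) ^ 2 := map_pow _ _ _
    rw [h1, h2, h3, aeval_X, aeval_C, hb, sub_self]
  have hPmonic : P.Monic := by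
    apply Polynomial.monic_of_natDegree_le_of_coeff_eq_one 2
    · rw [hPdef]; compute_degree
    · rw [hPdef]
      simp [Polynomial.coeff_X, Polynomial.coeff_C]
  have hPdeg : P.natDegree = 2 := by rw [hPdef]; compute_degree!
  have hbK : ∀ k : Kk τ, b ≠ algebraMap (Kk τ) (AlgebraicClosure (Kk τ)) k := by
    intro k hk
    apply hna k
    apply (algebraMap (Kk τ) (AlgebraicClosure (Kk τ))).injective
    rw [map_add, map_pow, ← hk, hb]
  have hbint : IsIntegral (Kk τ) b := ⟨P, hPmonic, hPb⟩
  have hmin_dvd : minpoly (Kk τ) b ∣ P := minpoly.dvd _ b hPb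
  have hmindeg : (minpoly (Kk τ) b).natDegree = 2 := by
    have hle : (minpoly (Kk τ) b).natDegree ≤ 2 :=
      le_trans (Polynomial.natDegree_le_of_dvd hmin_dvd hPmonic.ne_zero) (le_of_eq hPdeg)
    have hpos : 0 < (minpoly (Kk τ) b).natDegree := minpoly.natDegree_pos hbint
    have hne1 : (minpoly (Kk τ) b).natDegree ≠ 1 := by
      intro h1
      have hdeg1 : (minpoly (Kk τ) b).degree = 1 := by
        rw [Polynomial.degree_eq_natDegree (minpoly.ne_zero hbint), h1, Nat.cast_one]
      obtain ⟨k, hk⟩ := minpoly.degree_eq_one_iff.mp hdeg1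
      exact hbK k hk.symm
    omega
  have hmineq : minpoly (Kk τ) b = P := by
    obtain ⟨q, hq⟩ := hmin_dvd
    have hq0 : q ≠ 0 := by
      intro h0; rw [h0, mul_zero] at hq; exact hPmonic.ne_zero hq
    have hqdeg : q.natDegree = 0 := by
      have := Polynomial.natDegree_mul (minpoly.ne_zero hbint) hq0
      rw [← hq, hPdeg, hmindeg] at this
      omega
    have hqC : q = Polynomial.C (q.coeff 0) := Polynomial.eq_C_of_natDegree_eq_zero hqdeg
    have hlead : q.coeff 0 = 1 := by
      have h1 : P.leadingCoeff = (minpoly (Kk τ) b).leadingCoeff * q.leadingCoeff := by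
        rw [hq, Polynomial.leadingCoeff_mul]
      rw [hPmonic.leadingCoeff, (minpoly.monic hbint).leadingCoeff, one_mul] at h1
      rw [Polynomial.leadingCoeff, hqdeg] at h1
      exact h1.symm
    rw [hq, hqC, hlead, map_one, mul_one]
  have hrank : Module.finrank (Kk τ) ((Kk τ)⟮b⟯) = 2 := by
    rw [IntermediateField.adjoin.finrank hbint, hmindeg]
  set pb := IntermediateField.adjoin.powerBasis hbint with hpb
  have hdim : pb.dim = 2 := by
    rw [hpb, IntermediateField.adjoin.powerBasis_dim, hmindeg]
  set B := pb.basis.reindex (finCongr hdim) with hBdef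
  set G := pb.gen with hGdef
  have hB : ∀ i : Fin 2, B i = G ^ (i : ℕ) := by
    intro i
    rw [hBdef, Module.Basis.reindex_apply, pb.basis_eq_pow]
    congr 1
  have hB0 : B 0 = 1 := by rw [hB 0]; norm_num
  have hB1 : B 1 = G := by rw [hB 1]; norm_num
  have hGcoe : (G : AlgebraicClosure (Kk τ)) = b := by
    rw [hGdef, hpb, IntermediateField.adjoin.powerBasis_gen]
    exact IntermediateField.AdjoinSimple.coe_gen _ _
  have hG2 : G ^ 2 = algebraMap (Kk τ) ((Kk τ)⟮b⟯) a - G := by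
    apply Subtype.coe_injective
    push_cast [hGcoe]
    rw [← hb]
    ring
  have hrepr : ∀ p q : Kk τ, ∀ i : Fin 2,
      B.repr (p • B 0 + q • B 1) i = ![p, q] i := by
    intro p q i
    rw [map_add, map_smul, map_smul, B.repr_self, B.repr_self]
    fin_cases i <;>
      simp [Finsupp.single_apply]
  have hN : ∀ u v : Kk τ, Algebra.norm (Kk τ) (u • B 0 + v • B 1) =
      u ^ 2 + u * v + a * v ^ 2 := by
    intro u v
    have hx0 : (u • B 0 + v • B 1) * B 0 = u • B 0 + v • B 1 := by rw [hB0, mul_one]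
    have hx1 : (u • B 0 + v • B 1) * B 1 = (v * a) • B 0 + (u - v) • B 1 := by
      rw [hB0, hB1, add_mul, smul_mul_assoc, smul_mul_assoc, one_mul, ← pow_two, hG2,
        Algebra.algebraMap_eq_smul_one, smul_sub, smul_smul, sub_smul]
      abel
    rw [Algebra.norm_eq_matrix_det B, Matrix.det_fin_two,
      Algebra.leftMulMatrix_eq_repr_mul, Algebra.leftMulMatrix_eq_repr_mul,
      Algebra.leftMulMatrix_eq_repr_mul, Algebra.leftMulMatrix_eq_repr_mul,
      hx0, hx1, hrepr, hrepr, hrepr, hrepr]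
    have h2 : ∀ y z w : Kk τ, y * z - w = y * z + w := fun y z w => CharTwo.sub_eq_add _ _
    simp only [Matrix.cons_val_zero, Matrix.cons_val_one, Matrix.head_cons]
    rw [CharTwo.sub_eq_add, CharTwo.sub_eq_add]
    ring
  constructor
  · rintro ⟨-, hnorm⟩ h
    have hx0 : h • B 0 + (1 : Kk τ) • B 1 ≠ 0 := by
      intro h0
      have h2 := hrepr h 1 1
      rw [h0, map_zero] at h2
      norm_num at h2
    have h3 := hnorm _ hx0
    rw [hN h 1] at h3
    have h4 : h ^ 2 + h * 1 + a * 1 ^ 2 = h ^ 2 + h + a := by ring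
    rwa [h4] at h3
  · intro heven
    refine ⟨hrank, fun x hx => ?_⟩
    set u := B.repr x 0 with hu
    set v := B.repr x 1 with hv
    have hxr : x = u • B 0 + v • B 1 := by
      conv_lhs => rw [← B.sum_repr x]
      rw [Fin.sum_univ_two]
    rw [hxr, hN u v]
    rcases eq_or_ne v 0 with hv0 | hv0
    · have hu0 : u ≠ 0 := by
        intro h0
        apply hx
        rw [hxr, h0, hv0, zero_smul, zero_smul, add_zero]
      rw [hv0]
      have h5 : u ^ 2 + u * 0 + a * 0 ^ 2 = u * u := by ring
      rw [h5]
      exact even_order_sq u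
    · set h := u * v⁻¹ with hh
      have huv : h * v = u := by rw [hh]; field_simp
      have hfac : u ^ 2 + u * v + a * v ^ 2 = (v * v) * (h ^ 2 + h + a) := by
        rw [← huv]; ring
      rw [hfac, HahnSeries.order_mul (mul_ne_zero hv0 hv0) (AS_ne hna h)]
      exact (even_order_sq v).add (heven h)

end ASaux

/-- The Artin–Schreier defect `D(a) = ⋂_{h ∈ K} (h² + h + a)`, an intersection of
principal fractional `O`-ideals (as `O`-submodules of `K`). -/
def ASdefect (τ : ℕ) (a : Kk τ) : Submodule (Ok τ) (Kk τ) :=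
  ⨅ h : Kk τ, Submodule.span (Ok τ) {h ^ 2 + h + a}

open IntermediateField

/-- `L/K` is an unramified quadratic extension: it has degree 2 and the ramification
index is 1, i.e. the value group does not grow; for a quadratic extension of the
discretely valued field `K` this says that the valuation `ν(N_{L/K}(x))` of the norm
of every nonzero element of `L` is even. (Recall `ν(f) = f.order` on `K = F_{2^τ}((π))`.) -/
def IsUnramifiedQuadExt (τ : ℕ)
    (L : IntermediateField (Kk τ) (AlgebraicClosure (Kk τ))) : Prop :=
  Module.finrank (Kk τ) L = 2 ∧
    ∀ x : L, x ≠ 0 → Even (HahnSeries.order (Algebra.norm (Kk τ) x))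

set_option maxHeartbeats 1000000 in
/-- for `b` in an algebraic closure of `K` with `b² + b = a`,
`D(a) = O` if and only if `K(b)/K` is an unramified quadratic extension. -/
theorem ASdefect_eq_top_iff_unramified (τ : ℕ) (hτ : 0 < τ) (a : Kk τ)
    (b : AlgebraicClosure (Kk τ))
    (hb : b ^ 2 + b = algebraMap (Kk τ) (AlgebraicClosure (Kk τ)) a) :
    ASdefect τ a = Submodule.span (Ok τ) {(1 : Kk τ)} ↔
      IsUnramifiedQuadExt τ ((Kk τ)⟮b⟯) := by
  by_cases hna : ∀ h : Kk τ, h ^ 2 + h ≠ a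
  · unfold ASdefect IsUnramifiedQuadExt
    rw [ASaux.defect_iff hna, ASaux.exists_order_zero_iff_even hna]
    exact (ASaux.unram_iff b hb hna).symm
  · push_neg at hna
    obtain ⟨h, hh⟩ := hna
    constructor
    · intro heq
      exfalso
      have h1 : (1 : Kk τ) ∈ Submodule.span (Ok τ) {(1 : Kk τ)} :=
        Submodule.mem_span_singleton_self _
      rw [← heq] at h1
      unfold ASdefect at h1
      rw [Submodule.mem_iInf] at h1
      have h2 := h1 h
      have h3 : h ^ 2 + h + a = 0 := by rw [hh, CharTwo.add_self_eq_zero]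
      rw [h3, Submodule.span_zero_singleton, Submodule.mem_bot] at h2
      exact one_ne_zero h2
    · rintro ⟨hrk, -⟩
      exfalso
      set H := algebraMap (Kk τ) (AlgebraicClosure (Kk τ)) h with hH
      have hmem : b ∈ (⊥ : IntermediateField (Kk τ) (AlgebraicClosure (Kk τ))) := by
        rw [IntermediateField.mem_bot]
        have hHa : H ^ 2 + H = algebraMap (Kk τ) (AlgebraicClosure (Kk τ)) a := by
          rw [hH, ← map_pow, ← map_add, hh]
        have e1 : (b + H) ^ 2 + (b + H) = 0 := by
          rw [CharTwo.add_sq]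
          calc b ^ 2 + H ^ 2 + (b + H) = (b ^ 2 + b) + (H ^ 2 + H) := by ring
            _ = 0 := by rw [hb, hHa, CharTwo.add_self_eq_zero]
        have e2 : (b + H) * ((b + H) - 1) = 0 := by
          calc (b + H) * ((b + H) - 1) = (b + H) ^ 2 - (b + H) := by ring
            _ = (b + H) ^ 2 + (b + H) := CharTwo.sub_eq_add _ _
            _ = 0 := e1
        rcases mul_eq_zero.mp e2 with h0 | h0
        · refine ⟨h, ?_⟩
          have : b = -H := eq_neg_of_add_eq_zero_left h0
          rw [CharTwo.neg_eq] at this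
          exact this.symm
        · refine ⟨1 + h, ?_⟩
          have h0' : b + H = 1 := by rwa [sub_eq_zero] at h0
          rw [map_add, map_one, ← hH]
          have : b = 1 - H := eq_sub_of_add_eq h0'
          rw [CharTwo.sub_eq_add] at this
          exact this.symm
      rw [IntermediateField.adjoin_simple_eq_bot_iff.mpr hmem,
        IntermediateField.finrank_bot] at hrk
      norm_num at hrk
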